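/- Completeness of the verifier: if the prover always returns the true secret s(x₁,…,x_k) when queried, then VERIFIER never aborts and returns g(s()), i.e., the protocol has completeness 1. Formally, under the RFS promise, by downward induction on k: VERIFIER(x₁,…,x_k) = g(s(x₁,…,x_k)) and the abort condition a ≠ s'·x_{k+1} never triggers, since a = g(s(x₁,…,x_{k+1})) = s(x₁,…,x_k)·x_{k+1} = s'·x_{k+1}. -/

import Mathlib

/-- The RFS verifier interacting with a prover `P`, parameterized by its random choices
`r` (the random child `r xs i` chosen at node `xs` in repetition `i`), defined by
recursion on the remaining depth.  At a leaf it queries the oracle `A`; at an internal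
node it asks `P` for the secret `s'`, recursively checks the three random children, and
aborts (`none`) if any check fails, otherwise returns `some (g s')`. -/
def rfsVerifier (n : ℕ) (g : (Fin n → ZMod 2) → ZMod 2)
    (A : List (Fin n → ZMod 2) → ZMod 2)
    (P : List (Fin n → ZMod 2) → (Fin n → ZMod 2))
    (r : List (Fin n → ZMod 2) → Fin 3 → (Fin n → ZMod 2)) :
    ℕ → List (Fin n → ZMod 2) → Option (ZMod 2)
  | 0, xs => some (A xs)
  | d + 1, xs =>
    if ∀ i : Fin 3,
        rfsVerifier n g A P r d (xs ++ [r xs i])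
          = some (dotProduct (P xs) (r xs i))
    then some (g (P xs)) else none

/-- Completeness: with an honest prover, the verifier never aborts and returns the
correct answer `g (s [])`. -/
theorem rfs_verifier_complete (n l : ℕ) (hn : 0 < n) (hl : 0 < l)
    (g : (Fin n → ZMod 2) → ZMod 2)
    (s : List (Fin n → ZMod 2) → (Fin n → ZMod 2))
    (A : List (Fin n → ZMod 2) → ZMod 2)
    (r : List (Fin n → ZMod 2) → Fin 3 → (Fin n → ZMod 2))
    (hpromise : ∀ (xs : List (Fin n → ZMod 2)) (x : Fin n → ZMod 2),
      xs.length + 1 ≤ l → g (s (xs ++ [x])) = dotProduct (s xs) x)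
    (hA : ∀ xs : List (Fin n → ZMod 2), xs.length = l → A xs = g (s xs)) :
    (∀ xs : List (Fin n → ZMod 2), xs.length ≤ l →
      rfsVerifier n g A s r (l - xs.length) xs = some (g (s xs))) ∧
    rfsVerifier n g A s r l [] = some (g (s [])) := by
  have key : ∀ d (xs : List (Fin n → ZMod 2)), xs.length + d = l →
      rfsVerifier n g A s r d xs = some (g (s xs)) := by
    intro d
    induction d with
    | zero => intro xs h; simp at h; rw [rfsVerifier, hA xs h]
    | succ d ih =>
      intro xs h
      rw [rfsVerifier]
      rw [if_pos]
      intro i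
      rw [ih (xs ++ [r xs i]) (by simp; omega)]
      rw [hpromise xs (r xs i) (by omega)]
  have main : ∀ xs : List (Fin n → ZMod 2), xs.length ≤ l →
      rfsVerifier n g A s r (l - xs.length) xs = some (g (s xs)) := by
    intro xs h; exact key _ xs (by omega)
  refine ⟨main, ?_⟩
  simpa using main [] (by simp)
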